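/- Let 0 < λ. The Euclidean isosceles triangle T^e(y) with base 2y and legs 2·x^e(y), where x^e(y) = y²/(2√(y² − λ²)), contains its circumcenter if and only if λ < y ≤ √2·λ. -/

import Mathlib

open Real

/-- Auxiliary vector computation: the point `w•u + w•v` is equidistant from `0`, `u`, `v`
when `‖u‖ = ‖v‖ = b`, `‖u - v‖ = a` and `w * (4b² - a²) = b²`. -/
lemma stmt5_aux {E : Type*} [NormedAddCommGroup E] [InnerProductSpace ℝ E]
    (u v : E) (w b a : ℝ) (hu : ‖u‖ = b) (hv : ‖v‖ = b) (huv : ‖u - v‖ = a)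
    (hw : w * (4 * b ^ 2 - a ^ 2) = b ^ 2) :
    ‖w • u + w • v - u‖ = ‖w • u + w • v‖ ∧ ‖w • u + w • v - v‖ = ‖w • u + w • v‖ := by
  set k : ℝ := inner ℝ u v with hk
  have hk' : a ^ 2 = b ^ 2 - 2 * k + b ^ 2 := by
    have := norm_sub_sq_real u v
    rw [huv, hu, hv] at this
    linarith [this]
  have expand : ∀ c d : ℝ, ‖c • u + d • v‖ ^ 2
      = c ^ 2 * b ^ 2 + 2 * (c * d * k) + d ^ 2 * b ^ 2 := by
    intro c d
    have := norm_add_sq_real (c • u) (d • v)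
    rw [norm_smul, norm_smul, real_inner_smul_left, real_inner_smul_right, hu, hv] at this
    rw [this, mul_pow, mul_pow]
    simp only [Real.norm_eq_abs, sq_abs]
    ring
  have h1 : w • u + w • v - u = (w - 1) • u + w • v := by
    rw [sub_smul, one_smul]; abel
  have h2 : w • u + w • v - v = w • u + (w - 1) • v := by
    rw [sub_smul, one_smul]; abel
  have e0 := expand w w
  have e1 := expand (w - 1) w
  have e2 := expand w (w - 1)
  constructor
  · rw [h1, ← Real.sqrt_sq (norm_nonneg ((w - 1) • u + w • v)),
      ← Real.sqrt_sq (norm_nonneg (w • u + w • v)), e1, e0]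
    congr 1
    nlinarith [hk', hw]
  · rw [h2, ← Real.sqrt_sq (norm_nonneg (w • u + (w - 1) • v)),
      ← Real.sqrt_sq (norm_nonneg (w • u + w • v)), e2, e0]
    congr 1
    nlinarith [hk', hw]

set_option maxHeartbeats 1000000 in
/-- The Euclidean isosceles triangle `T^e(y)` (base `2y`, legs `2·x^e(y)` with
`x^e(y) = y²/(2√(y²−λ²))`) contains its circumcenter iff `λ < y ≤ √2·λ`. -/
theorem stmt5 (l y : ℝ) (hl : 0 < l) (hy : l < y)
    (s : Affine.Simplex ℝ (EuclideanSpace ℝ (Fin 2)) 2)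
    (hbase : dist (s.points 1) (s.points 2) = 2 * y)
    (hleg1 : dist (s.points 0) (s.points 1) = 2 * (y ^ 2 / (2 * Real.sqrt (y ^ 2 - l ^ 2))))
    (hleg2 : dist (s.points 0) (s.points 2) = 2 * (y ^ 2 / (2 * Real.sqrt (y ^ 2 - l ^ 2)))) :
    s.circumcenter ∈ convexHull ℝ (Set.range s.points) ↔ y ≤ Real.sqrt 2 * l := by
  have hy0 : (0 : ℝ) < y := hl.trans hy
  have ht : (0 : ℝ) < y ^ 2 - l ^ 2 := by nlinarith
  have hst : (0 : ℝ) < Real.sqrt (y ^ 2 - l ^ 2) := Real.sqrt_pos.mpr ht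
  obtain ⟨b, hbdef⟩ : ∃ b : ℝ, b = 2 * (y ^ 2 / (2 * Real.sqrt (y ^ 2 - l ^ 2))) := ⟨_, rfl⟩
  obtain ⟨a, hadef⟩ : ∃ a : ℝ, a = 2 * y := ⟨_, rfl⟩
  rw [← hbdef] at hleg1 hleg2
  rw [← hadef] at hbase
  have hb : b = y ^ 2 / Real.sqrt (y ^ 2 - l ^ 2) := by
    rw [hbdef]; field_simp
  have hbsq : b ^ 2 = y ^ 4 / (y ^ 2 - l ^ 2) := by
    rw [hb, div_pow, Real.sq_sqrt ht.le]
    ring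
  have hD : 4 * b ^ 2 - a ^ 2 = 4 * y ^ 2 * l ^ 2 / (y ^ 2 - l ^ 2) := by
    rw [hbsq, hadef]; field_simp; ring
  have hDpos : (0 : ℝ) < 4 * b ^ 2 - a ^ 2 := by rw [hD]; positivity
  obtain ⟨w, hwdef⟩ : ∃ w : ℝ, w = b ^ 2 / (4 * b ^ 2 - a ^ 2) := ⟨_, rfl⟩
  have hw : w * (4 * b ^ 2 - a ^ 2) = b ^ 2 := by
    rw [hwdef]; exact div_mul_cancel₀ _ hDpos.ne'
  have hwpos : 0 < w := by
    rw [hwdef]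
    have hb2 : (0:ℝ) < b ^ 2 := by rw [hbsq]; positivity
    positivity
  -- vectors
  obtain ⟨u, hudef⟩ : ∃ u, u = s.points 1 -ᵥ s.points 0 := ⟨_, rfl⟩
  obtain ⟨v, hvdef⟩ : ∃ v, v = s.points 2 -ᵥ s.points 0 := ⟨_, rfl⟩
  have hu : ‖u‖ = b := by rw [hudef, ← dist_eq_norm_vsub, dist_comm]; exact hleg1
  have hv : ‖v‖ = b := by rw [hvdef, ← dist_eq_norm_vsub, dist_comm]; exact hleg2
  have huv : ‖u - v‖ = a := by
    have h : u - v = s.points 1 -ᵥ s.points 2 := by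
      rw [hudef, hvdef, vsub_sub_vsub_cancel_right]
    rw [h, ← dist_eq_norm_vsub]; exact hbase
  obtain ⟨hd1, hd2⟩ := stmt5_aux u v w b a hu hv huv hw
  -- the candidate circumcenter
  obtain ⟨p, hpdef⟩ : ∃ p : EuclideanSpace ℝ (Fin 2), p = (w • u + w • v) +ᵥ s.points 0 :=
    ⟨_, rfl⟩
  obtain ⟨W, hWdef⟩ : ∃ W : Fin 3 → ℝ, W = ![1 - 2 * w, w, w] := ⟨_, rfl⟩
  have hWsum : ∑ i, W i = 1 := by
    rw [hWdef, Fin.sum_univ_three]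
    show (1 - 2 * w) + w + w = 1
    ring
  have hpcomb : p = Finset.univ.affineCombination ℝ s.points W := by
    rw [Finset.affineCombination_eq_weightedVSubOfPoint_vadd_of_sum_eq_one
      Finset.univ W s.points hWsum (s.points 0), Finset.weightedVSubOfPoint_apply,
      Fin.sum_univ_three]
    have hW0 : W 0 = 1 - 2 * w := by rw [hWdef]; rfl
    have hW1 : W 1 = w := by rw [hWdef]; rfl
    have hW2 : W 2 = w := by rw [hWdef]; rfl
    rw [hW0, hW1, hW2, vsub_self, smul_zero, zero_add, hpdef, hudef, hvdef]
  have hpspan : p ∈ affineSpan ℝ (Set.range s.points) := by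
    rw [hpcomb]
    exact affineCombination_mem_affineSpan hWsum s.points
  have hnu : s.points 0 -ᵥ s.points 1 = -u := by rw [hudef, neg_vsub_eq_vsub_rev]
  have hnv : s.points 0 -ᵥ s.points 2 = -v := by rw [hvdef, neg_vsub_eq_vsub_rev]
  have hdist0 : dist (s.points 0) p = ‖w • u + w • v‖ := by
    rw [dist_comm, hpdef, dist_eq_norm_vsub (EuclideanSpace ℝ (Fin 2)), vadd_vsub]
  have hdist1 : dist (s.points 1) p = ‖w • u + w • v‖ := by
    rw [dist_comm, hpdef, dist_eq_norm_vsub (EuclideanSpace ℝ (Fin 2)), vadd_vsub_assoc,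
      hnu, ← sub_eq_add_neg, hd1]
  have hdist2 : dist (s.points 2) p = ‖w • u + w • v‖ := by
    rw [dist_comm, hpdef, dist_eq_norm_vsub (EuclideanSpace ℝ (Fin 2)), vadd_vsub_assoc,
      hnv, ← sub_eq_add_neg, hd2]
  have hdist : ∀ i, dist (s.points i) p = ‖w • u + w • v‖ := by
    intro i
    fin_cases i
    · exact hdist0
    · exact hdist1
    · exact hdist2
  have hcc : p = s.circumcenter := s.eq_circumcenter_of_dist_eq hpspan hdist
  -- the key sign computation
  have hsq2 : Real.sqrt 2 ^ 2 = 2 := Real.sq_sqrt (by norm_num)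
  have hs2pos : 0 < Real.sqrt 2 := Real.sqrt_pos.mpr (by norm_num)
  have hsqiff : y ≤ Real.sqrt 2 * l ↔ y ^ 2 ≤ 2 * l ^ 2 := by
    constructor
    · intro h
      have h1 : 0 ≤ Real.sqrt 2 * l := by positivity
      nlinarith [mul_le_mul h h hy0.le h1]
    · intro h
      by_contra hcon
      push_neg at hcon
      have h1 : 0 < Real.sqrt 2 * l := by positivity
      nlinarith [mul_lt_mul_of_pos_left hcon h1, mul_lt_mul_of_pos_right hcon hy0]
  have hsign : (0 ≤ 1 - 2 * w) ↔ y ≤ Real.sqrt 2 * l := by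
    rw [hsqiff, hwdef]
    have hiff2 : 2 * b ^ 2 ≤ 4 * b ^ 2 - a ^ 2 ↔ y ^ 2 ≤ 2 * l ^ 2 := by
      rw [hD, hbsq, mul_div_assoc', div_le_div_iff₀ ht ht]
      constructor
      · intro h
        have h' : 2 * y ^ 4 ≤ 4 * y ^ 2 * l ^ 2 := le_of_mul_le_mul_right h ht
        nlinarith [h', mul_pos hy0 hy0]
      · intro h
        have h' : 2 * y ^ 4 ≤ 4 * y ^ 2 * l ^ 2 := by nlinarith [mul_pos hy0 hy0]
        exact mul_le_mul_of_nonneg_right h' ht.le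
    rw [← hiff2]
    constructor
    · intro h
      have h2 : b ^ 2 / (4 * b ^ 2 - a ^ 2) ≤ 1 / 2 := by linarith
      have h3 := (div_le_iff₀ hDpos).mp h2
      linarith
    · intro h
      have h2 : b ^ 2 ≤ 1 / 2 * (4 * b ^ 2 - a ^ 2) := by linarith
      have h3 := (div_le_iff₀ hDpos).mpr h2
      linarith
  rw [← hcc, ← hsign, hpcomb]
  constructor
  · intro hmem
    rw [convexHull_range_eq_exists_affineCombination] at hmem
    obtain ⟨t, w', hw0', hw1', hcomb'⟩ := hmem
    have hind := s.independent.indicator_eq_of_affineCombination_eq t Finset.univ w' W hw1'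
      hWsum hcomb'
    have h0 : Set.indicator (↑t) w' 0 = W 0 := by rw [hind]; simp
    have hW0 : W 0 = 1 - 2 * w := by rw [hWdef]; rfl
    rw [hW0] at h0
    rw [← h0]
    by_cases h0t : (0 : Fin 3) ∈ t
    · rw [Set.indicator_of_mem (by exact_mod_cast h0t) w']
      exact hw0' 0 h0t
    · rw [Set.indicator_of_notMem (by exact_mod_cast h0t) w']
  · intro h
    apply affineCombination_mem_convexHull
    · intro i _
      fin_cases i
      · simpa [hWdef] using h
      · simpa [hWdef] using hwpos.le
      · simpa [hWdef] using hwpos.le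
    · exact hWsum
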